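/- For p, q > 1, the generalized arcsine function arcsin_{p,q}(x) = ∫_0^x (1-t^q)^(-1/p) dt is geometrically convex on (0,1): for all x, y ∈ (0,1) and λ ∈ [0,1], arcsin_{p,q}(x^λ y^(1-λ)) ≤ arcsin_{p,q}(x)^λ · arcsin_{p,q}(y)^(1-λ). -/

import Mathlib

open Real Set intervalIntegral

private lemma aux_amgm {u v l : ℝ} (hu : 0 ≤ u) (hu1 : u ≤ 1) (hv : 0 ≤ v) (hv1 : v ≤ 1)
    (hl : 0 ≤ l) (hl1 : l ≤ 1) :
    (1 - u) ^ l * (1 - v) ^ (1 - l) ≤ 1 - u ^ l * v ^ (1 - l) := by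
  have h1 := Real.geom_mean_le_arith_mean2_weighted (w₁ := l) (w₂ := 1 - l) (p₁ := 1 - u)
    (p₂ := 1 - v) hl (by linarith) (by linarith) (by linarith) (by ring)
  have h2 := Real.geom_mean_le_arith_mean2_weighted (w₁ := l) (w₂ := 1 - l) (p₁ := u) (p₂ := v)
    hl (by linarith) hu hv (by ring)
  nlinarith [h1, h2]

/-- pointwise geometric convexity of the integrand -/
private lemma aux_pointwise {p q x y l s : ℝ} (hp : 1 < p) (hq : 1 < q)
    (hx : x ∈ Set.Ioo (0:ℝ) 1) (hy : y ∈ Set.Ioo (0:ℝ) 1) (hl0 : 0 ≤ l) (hl1 : l ≤ 1)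
    (hs0 : 0 ≤ s) (hs1 : s ≤ 1) :
    (1 - (s * (x ^ l * y ^ (1 - l))) ^ q) ^ (-1/p)
      ≤ ((1 - (s * x) ^ q) ^ (-1/p)) ^ l * ((1 - (s * y) ^ q) ^ (-1/p)) ^ (1 - l) := by
  obtain ⟨hx0, hx1⟩ := hx
  obtain ⟨hy0, hy1⟩ := hy
  set u := (s * x) ^ q with hu_def
  set v := (s * y) ^ q with hv_def
  have hsx0 : 0 ≤ s * x := mul_nonneg hs0 hx0.le
  have hsy0 : 0 ≤ s * y := mul_nonneg hs0 hy0.le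
  have hsx1 : s * x < 1 := lt_of_le_of_lt (by nlinarith) hx1
  have hsy1 : s * y < 1 := lt_of_le_of_lt (by nlinarith) hy1
  have hu0 : 0 ≤ u := Real.rpow_nonneg hsx0 q
  have hv0 : 0 ≤ v := Real.rpow_nonneg hsy0 q
  have hu1 : u < 1 := Real.rpow_lt_one hsx0 hsx1 (by linarith)
  have hv1 : v < 1 := Real.rpow_lt_one hsy0 hsy1 (by linarith)
  -- (s*z)^q = u^l * v^(1-l)
  have hz : (s * (x ^ l * y ^ (1 - l))) ^ q = u ^ l * v ^ (1 - l) := by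
    have hss : s ^ l * s ^ (1 - l) = s := by
      rw [← Real.rpow_add' hs0 (by norm_num)]; norm_num
    have hmul : s * (x ^ l * y ^ (1 - l)) = (s * x) ^ l * (s * y) ^ (1 - l) := by
      rw [Real.mul_rpow hs0 hx0.le, Real.mul_rpow hs0 hy0.le]
      calc s * (x ^ l * y ^ (1 - l)) = (s ^ l * s ^ (1 - l)) * (x ^ l * y ^ (1 - l)) := by
            rw [hss]
        _ = s ^ l * x ^ l * (s ^ (1 - l) * y ^ (1 - l)) := by ring
    rw [hmul, Real.mul_rpow (Real.rpow_nonneg hsx0 l) (Real.rpow_nonneg hsy0 (1 - l)),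
      hu_def, hv_def, ← Real.rpow_mul hsx0, ← Real.rpow_mul hsy0, mul_comm l q,
      mul_comm (1 - l) q, Real.rpow_mul hsx0, Real.rpow_mul hsy0]
  rw [hz]
  have key : (1 - u) ^ l * (1 - v) ^ (1 - l) ≤ 1 - u ^ l * v ^ (1 - l) :=
    aux_amgm hu0 hu1.le hv0 hv1.le hl0 hl1
  have hb : 0 < (1 - u) ^ l * (1 - v) ^ (1 - l) :=
    mul_pos (Real.rpow_pos_of_pos (by linarith) l) (Real.rpow_pos_of_pos (by linarith) (1 - l))
  have step : (1 - u ^ l * v ^ (1 - l)) ^ (-1/p)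
      ≤ ((1 - u) ^ l * (1 - v) ^ (1 - l)) ^ (-1/p) :=
    Real.rpow_le_rpow_of_nonpos hb key (by
      rw [div_nonpos_iff]; right; constructor <;> linarith)
  refine step.trans_eq ?_
  rw [Real.mul_rpow (Real.rpow_nonneg (by linarith) l) (Real.rpow_nonneg (by linarith) (1 - l)),
    ← Real.rpow_mul (by linarith : (0:ℝ) ≤ 1 - u), ← Real.rpow_mul (by linarith : (0:ℝ) ≤ 1 - v),
    mul_comm l (-1/p), mul_comm (1 - l) (-1/p),
    Real.rpow_mul (by linarith : (0:ℝ) ≤ 1 - u), Real.rpow_mul (by linarith : (0:ℝ) ≤ 1 - v)]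

private lemma aux_cont {p q c : ℝ} (hp : 1 < p) (hq : 1 < q) (hc0 : 0 ≤ c) (hc1 : c < 1) :
    ContinuousOn (fun s => (1 - (s * c) ^ q) ^ (-1/p)) (Icc (0:ℝ) 1) := by
  have h1 : ContinuousOn (fun s : ℝ => 1 - (s * c) ^ q) (Icc (0:ℝ) 1) :=
    continuousOn_const.sub
      (((continuousOn_id.mul continuousOn_const)).rpow_const fun s _ => Or.inr (by linarith))
  refine h1.rpow_const fun s hs => Or.inl ?_
  have hsc0 : 0 ≤ s * c := mul_nonneg hs.1 hc0
  have hsc1 : s * c < 1 := lt_of_le_of_lt (by nlinarith [hs.1, hs.2]) hc1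
  have h2 := Real.rpow_lt_one hsc0 hsc1 (by linarith : (0:ℝ) < q)
  exact ne_of_gt (by linarith)

theorem arcsin_pq_geom_convex (p q : ℝ) (hp : 1 < p) (hq : 1 < q) :
    ∀ x ∈ Set.Ioo (0:ℝ) 1, ∀ y ∈ Set.Ioo (0:ℝ) 1, ∀ l ∈ Set.Icc (0:ℝ) 1,
      (∫ t in (0:ℝ)..(x ^ l * y ^ (1 - l)), (1 - t ^ q) ^ (-1/p))
        ≤ (∫ t in (0:ℝ)..x, (1 - t ^ q) ^ (-1/p)) ^ l
            * (∫ t in (0:ℝ)..y, (1 - t ^ q) ^ (-1/p)) ^ (1 - l) := by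
  intro x hx y hy l hl
  obtain ⟨hl0, hl1⟩ := hl
  obtain ⟨hx0, hx1⟩ := hx
  obtain ⟨hy0, hy1⟩ := hy
  rcases eq_or_lt_of_le hl0 with h0 | h0
  · simp [← h0]
  rcases eq_or_lt_of_le hl1 with h1 | h1
  · simp [h1]
  have hp0 : (0:ℝ) < p := by linarith
  have hq0 : (0:ℝ) < q := by linarith
  have hl1' : 0 < 1 - l := by linarith
  set z := x ^ l * y ^ (1 - l) with hz_def
  have hz0 : 0 < z := mul_pos (Real.rpow_pos_of_pos hx0 _) (Real.rpow_pos_of_pos hy0 _)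
  have hz1 : z < 1 := by
    have hxl : x ^ l < 1 := Real.rpow_lt_one hx0.le hx1 h0
    have hyl : y ^ (1 - l) < 1 := Real.rpow_lt_one hy0.le hy1 hl1'
    have hxl0 : 0 < x ^ l := Real.rpow_pos_of_pos hx0 _
    nlinarith
  -- substitution t = s * c
  have subst_eq : ∀ c : ℝ, 0 < c → (∫ t in (0:ℝ)..c, (1 - t ^ q) ^ (-1/p))
      = c * ∫ s in (0:ℝ)..1, (1 - (s * c) ^ q) ^ (-1/p) := by
    intro c hc
    rw [intervalIntegral.integral_comp_mul_right (fun t => (1 - t ^ q) ^ (-1/p)) hc.ne']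
    simp [smul_eq_mul, mul_inv_cancel_left₀ hc.ne']
  -- integrability
  have hcz := aux_cont hp hq hz0.le hz1
  have hcx := aux_cont hp hq hx0.le hx1
  have hcy := aux_cont hp hq hy0.le hy1
  have hIz : IntervalIntegrable (fun s => (1 - (s * z) ^ q) ^ (-1/p)) MeasureTheory.volume 0 1 :=
    (by rw [uIcc_of_le zero_le_one]; exact hcz :
      ContinuousOn _ (uIcc (0:ℝ) 1)).intervalIntegrable
  have hprod : ContinuousOn (fun s => ((1 - (s * x) ^ q) ^ (-1/p)) ^ l
      * ((1 - (s * y) ^ q) ^ (-1/p)) ^ (1 - l)) (Icc (0:ℝ) 1) :=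
    (hcx.rpow_const fun s _ => Or.inr hl0).mul (hcy.rpow_const fun s _ => Or.inr hl1'.le)
  have hIprod : IntervalIntegrable (fun s => ((1 - (s * x) ^ q) ^ (-1/p)) ^ l
      * ((1 - (s * y) ^ q) ^ (-1/p)) ^ (1 - l)) MeasureTheory.volume 0 1 :=
    (by rw [uIcc_of_le zero_le_one]; exact hprod :
      ContinuousOn _ (uIcc (0:ℝ) 1)).intervalIntegrable
  -- monotonicity step
  have mono1 : (∫ s in (0:ℝ)..1, (1 - (s * z) ^ q) ^ (-1/p))
      ≤ ∫ s in (0:ℝ)..1, ((1 - (s * x) ^ q) ^ (-1/p)) ^ l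
          * ((1 - (s * y) ^ q) ^ (-1/p)) ^ (1 - l) :=
    intervalIntegral.integral_mono_on zero_le_one hIz hIprod fun s hs =>
      aux_pointwise hp hq ⟨hx0, hx1⟩ ⟨hy0, hy1⟩ hl0 hl1 hs.1 hs.2
  -- Hölder step
  set μ := MeasureTheory.volume.restrict (Ioc (0:ℝ) 1) with hμ
  haveI : MeasureTheory.IsFiniteMeasure μ := by
    constructor
    rw [hμ, MeasureTheory.Measure.restrict_apply_univ, Real.volume_Ioc]
    exact ENNReal.ofReal_lt_top
  have hconj : Real.HolderConjugate (1/l) (1/(1-l)) := by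
    rw [Real.holderConjugate_iff]; constructor
    · exact one_lt_one_div h0 h1
    · rw [one_div, one_div, inv_inv, inv_inv]; ring
  have hmeasx : Measurable (fun s : ℝ => ((1 - (s * x) ^ q) ^ (-1/p)) ^ l) := by
    fun_prop
  have hmeasy : Measurable (fun s : ℝ => ((1 - (s * y) ^ q) ^ (-1/p)) ^ (1 - l)) := by
    fun_prop
  have base_bound : ∀ c : ℝ, 0 < c → c < 1 → ∀ s ∈ Ioc (0:ℝ) 1,
      0 < 1 - (s * c) ^ q ∧ (1 - (s * c) ^ q) ^ (-1/p) ≤ (1 - c ^ q) ^ (-1/p) := by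
    intro c hc0 hc1 s hs
    have hsc0 : 0 ≤ s * c := mul_nonneg hs.1.le hc0.le
    have hsc : s * c ≤ c := by nlinarith [hs.1.le, hs.2]
    have hcq : c ^ q < 1 := Real.rpow_lt_one hc0.le hc1 hq0
    have hle : (s * c) ^ q ≤ c ^ q := Real.rpow_le_rpow hsc0 hsc hq0.le
    refine ⟨by linarith, Real.rpow_le_rpow_of_nonpos (by linarith) (by linarith)
      (by rw [div_nonpos_iff]; right; constructor <;> linarith)⟩
  have hmemx : MeasureTheory.MemLp (fun s : ℝ => ((1 - (s * x) ^ q) ^ (-1/p)) ^ l)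
      (ENNReal.ofReal (1/l)) μ := by
    refine MeasureTheory.MemLp.of_bound hmeasx.aestronglyMeasurable
      (((1 - x ^ q) ^ (-1/p)) ^ l) ?_
    filter_upwards [MeasureTheory.ae_restrict_mem measurableSet_Ioc] with s hs
    obtain ⟨hpos, hle⟩ := base_bound x hx0 hx1 s hs
    rw [Real.norm_of_nonneg (Real.rpow_nonneg (Real.rpow_nonneg (by linarith) _) _)]
    exact Real.rpow_le_rpow (Real.rpow_nonneg (by linarith) _) hle hl0
  have hmemy : MeasureTheory.MemLp (fun s : ℝ => ((1 - (s * y) ^ q) ^ (-1/p)) ^ (1 - l))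
      (ENNReal.ofReal (1/(1-l))) μ := by
    refine MeasureTheory.MemLp.of_bound hmeasy.aestronglyMeasurable
      (((1 - y ^ q) ^ (-1/p)) ^ (1 - l)) ?_
    filter_upwards [MeasureTheory.ae_restrict_mem measurableSet_Ioc] with s hs
    obtain ⟨hpos, hle⟩ := base_bound y hy0 hy1 s hs
    rw [Real.norm_of_nonneg (Real.rpow_nonneg (Real.rpow_nonneg (by linarith) _) _)]
    exact Real.rpow_le_rpow (Real.rpow_nonneg (by linarith) _) hle hl1'.le
  have hnnx : 0 ≤ᵐ[μ] (fun s : ℝ => ((1 - (s * x) ^ q) ^ (-1/p)) ^ l) := by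
    filter_upwards [MeasureTheory.ae_restrict_mem measurableSet_Ioc] with s hs
    exact Real.rpow_nonneg (Real.rpow_nonneg (base_bound x hx0 hx1 s hs).1.le _) _
  have hnny : 0 ≤ᵐ[μ] (fun s : ℝ => ((1 - (s * y) ^ q) ^ (-1/p)) ^ (1 - l)) := by
    filter_upwards [MeasureTheory.ae_restrict_mem measurableSet_Ioc] with s hs
    exact Real.rpow_nonneg (Real.rpow_nonneg (base_bound y hy0 hy1 s hs).1.le _) _
  have holder := MeasureTheory.integral_mul_le_Lp_mul_Lq_of_nonneg hconj hnnx hnny hmemx hmemy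
  rw [one_div_one_div, one_div_one_div] at holder
  have hGr : (∫ s, (((1 - (s * x) ^ q) ^ (-1/p)) ^ l) ^ (1/l) ∂μ)
      = ∫ s, (1 - (s * x) ^ q) ^ (-1/p) ∂μ := by
    refine MeasureTheory.integral_congr_ae ?_
    filter_upwards [MeasureTheory.ae_restrict_mem measurableSet_Ioc] with s hs
    rw [← Real.rpow_mul (Real.rpow_nonneg (base_bound x hx0 hx1 s hs).1.le _),
      mul_one_div_cancel h0.ne', Real.rpow_one]
  have hHr : (∫ s, (((1 - (s * y) ^ q) ^ (-1/p)) ^ (1 - l)) ^ (1/(1-l)) ∂μ)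
      = ∫ s, (1 - (s * y) ^ q) ^ (-1/p) ∂μ := by
    refine MeasureTheory.integral_congr_ae ?_
    filter_upwards [MeasureTheory.ae_restrict_mem measurableSet_Ioc] with s hs
    rw [← Real.rpow_mul (Real.rpow_nonneg (base_bound y hy0 hy1 s hs).1.le _),
      mul_one_div_cancel hl1'.ne', Real.rpow_one]
  rw [hGr, hHr] at holder
  -- translate interval integrals to μ-integrals
  have int_eq : ∀ g : ℝ → ℝ, (∫ s in (0:ℝ)..1, g s) = ∫ s, g s ∂μ := fun g =>
    intervalIntegral.integral_of_le zero_le_one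
  have holder' : (∫ s in (0:ℝ)..1, ((1 - (s * x) ^ q) ^ (-1/p)) ^ l
        * ((1 - (s * y) ^ q) ^ (-1/p)) ^ (1 - l))
      ≤ (∫ s in (0:ℝ)..1, (1 - (s * x) ^ q) ^ (-1/p)) ^ l
        * (∫ s in (0:ℝ)..1, (1 - (s * y) ^ q) ^ (-1/p)) ^ (1 - l) := by
    rw [int_eq, int_eq, int_eq]; exact holder
  -- nonnegativity of the integrals
  have hIx0 : 0 ≤ ∫ s in (0:ℝ)..1, (1 - (s * x) ^ q) ^ (-1/p) :=
    intervalIntegral.integral_nonneg zero_le_one fun s hs =>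
      Real.rpow_nonneg (by
        have : (s * x) ^ q < 1 := Real.rpow_lt_one (mul_nonneg hs.1 hx0.le)
          (lt_of_le_of_lt (by nlinarith [hs.1, hs.2]) hx1) hq0
        linarith) _
  have hIy0 : 0 ≤ ∫ s in (0:ℝ)..1, (1 - (s * y) ^ q) ^ (-1/p) :=
    intervalIntegral.integral_nonneg zero_le_one fun s hs =>
      Real.rpow_nonneg (by
        have : (s * y) ^ q < 1 := Real.rpow_lt_one (mul_nonneg hs.1 hy0.le)
          (lt_of_le_of_lt (by nlinarith [hs.1, hs.2]) hy1) hq0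
        linarith) _
  calc (∫ t in (0:ℝ)..z, (1 - t ^ q) ^ (-1/p))
      = z * ∫ s in (0:ℝ)..1, (1 - (s * z) ^ q) ^ (-1/p) := subst_eq z hz0
    _ ≤ z * ((∫ s in (0:ℝ)..1, (1 - (s * x) ^ q) ^ (-1/p)) ^ l
        * (∫ s in (0:ℝ)..1, (1 - (s * y) ^ q) ^ (-1/p)) ^ (1 - l)) :=
        mul_le_mul_of_nonneg_left (mono1.trans holder') hz0.le
    _ = (x * ∫ s in (0:ℝ)..1, (1 - (s * x) ^ q) ^ (-1/p)) ^ l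
        * (y * ∫ s in (0:ℝ)..1, (1 - (s * y) ^ q) ^ (-1/p)) ^ (1 - l) := by
        rw [Real.mul_rpow hx0.le hIx0, Real.mul_rpow hy0.le hIy0, hz_def]; ring
    _ = (∫ t in (0:ℝ)..x, (1 - t ^ q) ^ (-1/p)) ^ l
        * (∫ t in (0:ℝ)..y, (1 - t ^ q) ^ (-1/p)) ^ (1 - l) := by
        rw [← subst_eq x hx0, ← subst_eq y hy0]
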